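/- Let A be a unital C*-algebra and u, v ∈ A isometries satisfying both u·v = λ·v·u and u*·v = conj(λ)·v·u*, with |λ| = 1. Define e_{(a,b)(d,c)} := u^a v^b (1 − uu*)(1 − vv*) (v*)^c (u*)^d for a,b,c,d ∈ ℕ₀. Then these elements satisfy the matrix-unit relations: e_{(a,b)(d,c)}* = e_{(d,c)(a,b)} and e_{(a,b)(d,c)} · e_{(f,g)(i,h)} = δ_{df} δ_{cg} · e_{(a,b)(i,h)}. -/

import Mathlib

private lemma hcan' {A : Type*} [Ring A] [StarRing A] (x : A) (hx : star x * x = 1) :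
    ∀ n (t : A), (star x)^n * (x^n * t) = t := by
  intro n
  induction n with
  | zero => simp
  | succ k ih =>
    intro t
    rw [pow_succ, pow_succ']
    simp only [mul_assoc]
    rw [← mul_assoc (star x) x, hx, one_mul]
    exact ih t

private lemma hswap' {A : Type*} [Ring A] [Algebra ℂ A] (x y : A) (μ : ℂ)
    (h : x * y = μ • (y * x)) : ∀ n (t : A), x * (y^n * t) = μ^n • (y^n * (x * t)) := by
  intro n
  induction n with
  | zero => simp
  | succ k ih =>
    intro t
    rw [pow_succ' y, mul_assoc, ← mul_assoc x y, h, smul_mul_assoc, mul_assoc, ih,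
      mul_smul_comm, smul_smul, ← pow_succ', ← mul_assoc y, ← pow_succ' y]

private lemma hswap2' {A : Type*} [Ring A] [Algebra ℂ A] (x y : A) (μ : ℂ)
    (h : x * y = μ • (y * x)) :
    ∀ m n (t : A), x^m * (y^n * t) = μ^(m*n) • (y^n * (x^m * t)) := by
  intro m
  induction m with
  | zero => simp
  | succ k ih =>
    intro n t
    rw [pow_succ' x, mul_assoc, ih, mul_smul_comm, hswap' x y μ h, smul_smul,
      ← pow_add, Nat.succ_mul, mul_assoc]

/-- For isometries `u, v` with both twisted relations `uv = λ•vu` and `u*v = conj(λ)•vu*`,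
the elements `e_{(a,b)(d,c)} := u^a v^b (1-uu*)(1-vv*) (v*)^c (u*)^d` satisfy the
matrix-unit relations. -/
theorem stmt_12 {A : Type*} [NormedRing A] [StarRing A] [CStarRing A]
    [NormedAlgebra ℂ A] [StarModule ℂ A] [CompleteSpace A]
    (u v : A) (hu : star u * u = 1) (hv : star v * v = 1)
    (l : ℂ) (hl : ‖l‖ = 1) (huv : u * v = l • (v * u))
    (huv' : star u * v = (starRingEnd ℂ) l • (v * star u))
    (e : ℕ → ℕ → ℕ → ℕ → A)
    (he : ∀ a b d c, e a b d c
      = u ^ a * v ^ b * (1 - u * star u) * (1 - v * star v) * (star v) ^ c * (star u) ^ d) :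
    (∀ a b d c, star (e a b d c) = e d c a b) ∧
    (∀ a b d c f g i h, e a b d c * e f g i h
      = if d = f ∧ c = g then e a b i h else 0) := by
  set P : A := 1 - u * star u with hPdef
  set Q : A := 1 - v * star v with hQdef
  -- scalar facts
  have hll : l * (starRingEnd ℂ) l = 1 := by
    rw [Complex.mul_conj]
    norm_cast
    simp [Complex.normSq_eq_norm_sq, hl]
  have hll' : (starRingEnd ℂ) l * l = 1 := by rw [mul_comm]; exact hll
  -- derived commutation relations
  have r1' : star v * u = l • (u * star v) := by
    have h := congrArg star huv'
    simp only [star_mul, star_star, star_smul, RCLike.star_def, Complex.conj_conj] at h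
    exact h
  have husv : u * star v = (starRingEnd ℂ) l • (star v * u) := by
    rw [r1', smul_smul, hll', one_smul]
  have cQu_core : u * (v * star v) = (v * star v) * u := by
    calc u * (v * star v) = (u * v) * star v := by rw [mul_assoc]
      _ = l • (v * (u * star v)) := by rw [huv, smul_mul_assoc, mul_assoc]
      _ = (l * (starRingEnd ℂ) l) • (v * (star v * u)) := by
          rw [husv, mul_smul_comm, smul_smul]
      _ = (v * star v) * u := by rw [hll, one_smul, mul_assoc]
  have cPv_core : (u * star u) * v = v * (u * star u) := by
    calc (u * star u) * v = u * (star u * v) := by rw [mul_assoc]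
      _ = (starRingEnd ℂ) l • ((u * v) * star u) := by
          rw [huv', mul_smul_comm, mul_assoc]
      _ = ((starRingEnd ℂ) l * l) • ((v * u) * star u) := by
          rw [huv, smul_mul_assoc, smul_smul]
      _ = v * (u * star u) := by rw [hll', one_smul, mul_assoc]
  have cPsv_core : (u * star u) * star v = star v * (u * star u) := by
    have h := congrArg star cPv_core
    simp only [star_mul, star_star, mul_assoc] at h
    simp only [mul_assoc]
    exact h.symm
  have cQsu_core : (v * star v) * star u = star u * (v * star v) := by
    have h := congrArg star cQu_core
    simp only [star_mul, star_star, mul_assoc] at h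
    simp only [mul_assoc]
    exact h
  have cQu : Q * u = u * Q := by
    simp only [hQdef, sub_mul, mul_sub, one_mul, mul_one, cQu_core]
  have cPsv : P * star v = star v * P := by
    simp only [hPdef, sub_mul, mul_sub, one_mul, mul_one, cPsv_core]
  have cPQ_core : (u * star u) * (v * star v) = (v * star v) * (u * star u) := by
    calc (u * star u) * (v * star v) = ((u * star u) * v) * star v := (mul_assoc _ _ _).symm
      _ = v * ((u * star u) * star v) := by rw [cPv_core, mul_assoc]
      _ = (v * star v) * (u * star u) := by rw [cPsv_core, ← mul_assoc]
  have cPQ : P * Q = Q * P := by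
    simp only [hPdef, hQdef, sub_mul, mul_sub, one_mul, mul_one, cPQ_core]
    abel
  have tPQ : ∀ t : A, Q * (P * t) = P * (Q * t) := by
    intro t
    rw [← mul_assoc, ← cPQ, mul_assoc]
  -- zero lemmas
  have zPu : P * u = 0 := by
    simp [hPdef, sub_mul, mul_assoc, hu]
  have zQv : Q * v = 0 := by
    simp [hQdef, sub_mul, mul_assoc, hv]
  have zuP : star u * P = 0 := by
    simp [hPdef, mul_sub, ← mul_assoc, hu]
  have zvQ : star v * Q = 0 := by
    simp [hQdef, mul_sub, ← mul_assoc, hv]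
  -- idempotency
  have PP : P * P = P := by
    calc P * P = P * 1 - (P * u) * star u := by
          rw [hPdef]; simp only [mul_sub, mul_one, mul_assoc]
      _ = P := by rw [zPu, zero_mul, mul_one, sub_zero]
  have QQ : Q * Q = Q := by
    calc Q * Q = Q * 1 - (Q * v) * star v := by
          rw [hQdef]; simp only [mul_sub, mul_one, mul_assoc]
      _ = Q := by rw [zQv, zero_mul, mul_one, sub_zero]
  have tQu : ∀ n (t : A), Q * (u^n * t) = u^n * (Q * t) := by
    intro n t
    have h1 : Q * u = (1 : ℂ) • (u * Q) := by rw [one_smul, cQu]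
    simpa using hswap' Q u 1 h1 n t
  -- star of P and Q
  have hPstar : star P = P := by
    rw [hPdef]; simp [star_sub, star_mul, star_star]
  have hQstar : star Q = Q := by
    rw [hQdef]; simp [star_sub, star_mul, star_star]
  -- the core matrix-unit computation
  have hcore : ∀ c d f g (y : A),
      P * (Q * ((star v)^c * ((star u)^d * (u^f * (v^g * (P * (Q * y))))))) =
        if d = f ∧ c = g then P * (Q * y) else 0 := by
    intro c d f g y
    rcases lt_trichotomy d f with hdf | rfl | hdf
    · obtain ⟨m, rfl⟩ := Nat.exists_eq_add_of_lt hdf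
      rw [if_neg (by omega)]
      rw [show d + m + 1 = d + (m+1) from rfl, pow_add, mul_assoc (u^d), hcan' u hu d]
      rw [hswap2' (star v) u l r1' c (m+1)]
      rw [mul_smul_comm, mul_smul_comm]
      rw [tQu]
      rw [pow_succ' u m, mul_assoc u, ← mul_assoc P u, zPu, zero_mul, smul_zero]
    · rw [hcan' u hu d]
      rcases lt_trichotomy c g with hcg | rfl | hcg
      · obtain ⟨m, rfl⟩ := Nat.exists_eq_add_of_lt hcg
        rw [if_neg (by omega)]
        rw [show c + m + 1 = c + (m+1) from rfl, pow_add, mul_assoc (v^c), hcan' v hv c]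
        rw [pow_succ' v m, mul_assoc v, ← mul_assoc Q v, zQv, zero_mul, mul_zero]
      · rw [if_pos ⟨rfl, rfl⟩, hcan' v hv c]
        rw [tPQ, ← mul_assoc Q Q, QQ, ← mul_assoc P P, PP]
      · obtain ⟨m, rfl⟩ := Nat.exists_eq_add_of_lt hcg
        rw [if_neg (by omega)]
        rw [show g + m + 1 = (m+1) + g by omega, pow_add, mul_assoc ((star v)^(m+1)),
          hcan' v hv g]
        rw [pow_succ (star v) m, mul_assoc ((star v)^m), ← mul_assoc (star v) P,
          ← cPsv, mul_assoc P (star v), ← mul_assoc (star v) Q, zvQ, zero_mul,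
          mul_zero, mul_zero, mul_zero, mul_zero]
    · obtain ⟨m, rfl⟩ := Nat.exists_eq_add_of_lt hdf
      rw [if_neg (by omega)]
      rw [show f + m + 1 = (m+1) + f by omega, pow_add, mul_assoc ((star u)^(m+1)),
        hcan' u hu f]
      rw [hswap2' (star u) v ((starRingEnd ℂ) l) huv' (m+1) g]
      rw [pow_succ (star u) m, mul_assoc ((star u)^m), ← mul_assoc (star u) P, zuP,
        zero_mul, mul_zero, mul_zero, smul_zero, mul_zero, mul_zero, mul_zero]
  constructor
  · intro a b d c
    rw [he, he]
    simp only [star_mul, star_pow, star_star, hPstar, hQstar, mul_assoc]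
    rw [tPQ]
  · intro a b d c f g i h
    rw [he, he, he]
    simp only [mul_assoc]
    rw [hcore c d f g ((star v)^h * (star u)^i)]
    split_ifs with hc <;> simp
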